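/- Let a ∈ ℚ with v_2(a) ≥ 1, c = -a - a², and f(x) = x² + c. Then v_2(f^n(0) - a) = v_2(a) + 1 for all n ≥ 2. -/

import Mathlib

lemma aux_ne (x y : ℚ) (h : padicValRat 2 x < padicValRat 2 y) (hx : x ≠ 0) : x + y ≠ 0 := by
  intro h0
  have hy : y = -x := by linarith [eq_neg_of_add_eq_zero_right h0]
  rw [hy, padicValRat.neg] at h
  exact lt_irrefl _ h

lemma aux_add (x y : ℚ) (hx : x ≠ 0) (hy : y ≠ 0) (h : padicValRat 2 x < padicValRat 2 y) :
    x + y ≠ 0 ∧ padicValRat 2 (x + y) = padicValRat 2 x := by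
  have hne := aux_ne x y h hx
  exact ⟨hne, padicValRat.add_eq_of_lt hne hx hy h⟩

theorem stmt8 (a : ℚ) (ha : a ≠ 0) (hv : 1 ≤ padicValRat 2 a)
    (c : ℚ) (hc : c = -a - a^2) (f : ℚ → ℚ) (hf : ∀ x, f x = x^2 + c) :
    ∀ n : ℕ, 2 ≤ n → f^[n] 0 - a ≠ 0 ∧
      padicValRat 2 (f^[n] 0 - a) = padicValRat 2 a + 1 := by
  set v := padicValRat 2 a with hvdef
  have h2 : padicValRat 2 (2 : ℚ) = 1 := by
    simpa using padicValRat.self (p := 2) (by norm_num)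
  have h2a : padicValRat 2 (2 * a) = v + 1 := by
    rw [padicValRat.mul (by norm_num) ha, h2, add_comm]
  have h2a' : (2 : ℚ) * a ≠ 0 := by positivity
  -- valuation of a^2 - 1
  have ha2 : padicValRat 2 (a ^ 2) = 2 * v := by
    rw [padicValRat.pow (p := 2) a]; ring
  have hsq1 : a ^ 2 - 1 ≠ 0 ∧ padicValRat 2 (a ^ 2 - 1) = 0 := by
    have := aux_add (-1) (a ^ 2) (by norm_num) (pow_ne_zero 2 ha)
      (by rw [padicValRat.neg, ha2]; simp [padicValRat.one]; linarith)
    constructor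
    · intro h; apply this.1; rw [← h]; ring
    · have h := this.2
      rw [show (-1 : ℚ) + a ^ 2 = a ^ 2 - 1 by ring] at h
      rw [h, padicValRat.neg, padicValRat.one]
  -- key recurrence step
  have step : ∀ u : ℚ, u ≠ 0 → padicValRat 2 u = v + 1 →
      (u * (u + 2 * a) - 2 * a ≠ 0 ∧
        padicValRat 2 (u * (u + 2 * a) - 2 * a) = v + 1) := by
    intro u hu hval
    by_cases hs : u + 2 * a = 0
    · rw [hs, mul_zero, zero_sub, padicValRat.neg]
      exact ⟨by simpa using h2a', h2a⟩
    · have hus : u * (u + 2 * a) ≠ 0 := mul_ne_zero hu hs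
      have hvs : v + 1 ≤ padicValRat 2 (u + 2 * a) := by
        have := padicValRat.min_le_padicValRat_add (p := 2) (q := u) (r := 2 * a) hs
        rw [hval, h2a, min_self] at this; exact this
      have hprod : padicValRat 2 (u * (u + 2 * a)) = (v + 1) + padicValRat 2 (u + 2 * a) := by
        rw [padicValRat.mul hu hs, hval]
      have hlt : padicValRat 2 (-(2 * a)) < padicValRat 2 (u * (u + 2 * a)) := by
        rw [padicValRat.neg, h2a, hprod]; linarith
      have := aux_add (-(2 * a)) (u * (u + 2 * a)) (by simpa using h2a') hus hlt
      constructor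
      · intro h; apply this.1; rw [← h]; ring
      · have h := this.2
        rw [show -(2 * a) + u * (u + 2 * a) = u * (u + 2 * a) - 2 * a by ring] at h
        rw [h, padicValRat.neg, h2a]
  -- base case: n = 2
  have base : f^[2] 0 - a ≠ 0 ∧ padicValRat 2 (f^[2] 0 - a) = v + 1 := by
    have hval : f^[2] 0 - a = 2 * a * (a ^ 2 - 1) + a ^ 4 := by
      simp only [Function.iterate_succ, Function.iterate_zero, Function.comp_apply, id_eq, hf, hc]
      ring
    have hx : (2 : ℚ) * a * (a ^ 2 - 1) ≠ 0 := mul_ne_zero h2a' hsq1.1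
    have hxv : padicValRat 2 (2 * a * (a ^ 2 - 1)) = v + 1 := by
      rw [padicValRat.mul h2a' hsq1.1, h2a, hsq1.2, add_zero]
    have hyv : padicValRat 2 (a ^ 4) = 4 * v := by
      rw [padicValRat.pow (p := 2) a]; ring
    have := aux_add (2 * a * (a ^ 2 - 1)) (a ^ 4) hx (pow_ne_zero 4 ha)
      (by rw [hxv, hyv]; linarith)
    rw [hval]
    exact ⟨this.1, by rw [this.2, hxv]⟩
  -- induction
  intro n hn
  induction n with
  | zero => omega
  | succ m ih =>
    rcases Nat.lt_or_ge m 2 with hm | hm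
    · interval_cases m
      · omega
      · exact base
    · have ihm := ih hm
      have hrec : f^[m + 1] 0 - a =
          (f^[m] 0 - a) * ((f^[m] 0 - a) + 2 * a) - 2 * a := by
        rw [Function.iterate_succ_apply', hf, hc]; ring
      rw [hrec]
      exact step _ ihm.1 ihm.2
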